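/- In the ℂ[x, y]-module M = (ℂ[x,y]·dx ⊕ ℂ[x,y]·dy) / ⟨x·dx, x·dy + y·dx, y·dy⟩, the annihilator of M is the ideal (x², xy, y²), i.e. the square of the maximal ideal (x, y). -/

import Mathlib

open MvPolynomial

section Aux

/-- constant coefficient of the partial derivative = coefficient of `X i`. -/
lemma aux_cc_pderiv (i : Fin 2) (p : MvPolynomial (Fin 2) ℂ) :
    constantCoeff (pderiv i p) = coeff (Finsupp.single i 1) p := by
  induction p using MvPolynomial.induction_on' with
  | monomial d c =>
      rw [pderiv_monomial, coeff_monomial]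
      rw [constantCoeff_monomial]
      by_cases hd : d = Finsupp.single i 1
      · subst hd
        simp
      · rw [if_neg hd]
        by_cases h0 : d - Finsupp.single i 1 = 0
        · rw [if_pos h0]
          have hle : d ≤ Finsupp.single i 1 := by
            rwa [tsub_eq_zero_iff_le] at h0
          by_cases hdi : d i = 0
          · simp [hdi]
          · have hd1 : d i = 1 := by
              have := hle i
              simp [Finsupp.single_apply] at this
              omega
            exfalso
            apply hd
            ext j
            by_cases hj : j = i
            · simp [hj, hd1, Finsupp.single_apply]
            · have := hle j
              rw [Finsupp.single_apply, if_neg (fun e => hj e.symm)] at this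
              rw [Finsupp.single_apply, if_neg (fun e => hj e.symm)]
              omega
        · rw [if_neg h0]
  | add p q hp hq => simp [hp, hq]

end Aux

/-- In the `ℂ[x,y]`-module
`M = (ℂ[x,y]·dx ⊕ ℂ[x,y]·dy) / ⟨x·dx, x·dy + y·dx, y·dy⟩`
(with `dx, dy` the standard basis of the free module of rank 2, so that
`x·dx = (x, 0)`, `x·dy + y·dx = (y, x)`, `y·dy = (0, y)`), the annihilator of
`M` is the ideal `(x², xy, y²)`, i.e. the square of the maximal ideal
`(x, y)`. -/
theorem statement13
    (N : Submodule (MvPolynomial (Fin 2) ℂ)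
      (MvPolynomial (Fin 2) ℂ × MvPolynomial (Fin 2) ℂ))
    (hN : N = Submodule.span (MvPolynomial (Fin 2) ℂ)
      {(X 0, 0), (X 1, X 0), (0, X 1)}) :
    (∀ h : MvPolynomial (Fin 2) ℂ,
      (∀ m : (MvPolynomial (Fin 2) ℂ × MvPolynomial (Fin 2) ℂ) ⧸ N, h • m = 0) ↔
        h ∈ Ideal.span {X 0 ^ 2, X 0 * X 1, X 1 ^ 2}) ∧
    (Ideal.span {X 0 ^ 2, X 0 * X 1, X 1 ^ 2} : Ideal (MvPolynomial (Fin 2) ℂ))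
      = Ideal.span {X 0, X 1} ^ 2 := by
  set R := MvPolynomial (Fin 2) ℂ
  constructor
  · intro h
    constructor
    · -- annihilates → h ∈ (x², xy, y²)
      intro hann
      -- membership of (h,0) and (0,h) in N
      have h1 : ((h, 0) : R × R) ∈ N := by
        have := hann (Submodule.Quotient.mk ((1 : R), (0 : R)))
        rw [← Submodule.Quotient.mk_smul, Submodule.Quotient.mk_eq_zero] at this
        simpa using this
      have h2 : ((0, h) : R × R) ∈ N := by
        have := hann (Submodule.Quotient.mk ((0 : R), (1 : R)))
        rw [← Submodule.Quotient.mk_smul, Submodule.Quotient.mk_eq_zero] at this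
        simpa using this
      -- invariant on N
      have key : ∀ v : R × R, v ∈ N →
          constantCoeff v.1 = 0 ∧ constantCoeff v.2 = 0 ∧
            constantCoeff (pderiv 1 v.1) = constantCoeff (pderiv 0 v.2) := by
        rw [hN]
        intro v hv
        induction hv using Submodule.span_induction with
        | mem v hv =>
            rcases hv with h | h | h <;> subst h <;>
              refine ⟨by simp, by simp, ?_⟩ <;>
              simp [pderiv_X, Finsupp.single_apply]
        | zero => simp
        | add u w _ _ hu hw =>
            refine ⟨by simp [hu.1, hw.1], by simp [hu.2.1, hw.2.1], ?_⟩
            simp [hu.2.2, hw.2.2]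
        | smul p v _ hv =>
            refine ⟨by simp [hv.1], by simp [hv.2.1], ?_⟩
            simp [pderiv_mul, hv.1, hv.2.1, hv.2.2]
      have k1 := key _ h1
      have k2 := key _ h2
      have hc0 : coeff 0 h = 0 := k1.1
      have hcx : coeff (Finsupp.single (0 : Fin 2) 1) h = 0 := by
        rw [← aux_cc_pderiv]
        simpa using k2.2.2.symm
      have hcy : coeff (Finsupp.single (1 : Fin 2) 1) h = 0 := by
        rw [← aux_cc_pderiv]
        simpa using k1.2.2
      -- rewrite the ideal as a monomial ideal
      have hset : ({X 0 ^ 2, X 0 * X 1, X 1 ^ 2} : Set R) =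
          (fun s => monomial s (1 : ℂ)) ''
            {Finsupp.single 0 2, Finsupp.single 0 1 + Finsupp.single 1 1,
              Finsupp.single 1 2} := by
        rw [Set.image_insert_eq, Set.image_insert_eq, Set.image_singleton]
        rw [X_pow_eq_monomial, X_pow_eq_monomial]
        congr 2
        rw [show (X 0 : MvPolynomial (Fin 2) ℂ) = monomial (Finsupp.single 0 1) 1 from rfl,
          show (X 1 : MvPolynomial (Fin 2) ℂ) = monomial (Finsupp.single 1 1) 1 from rfl,
          monomial_mul, one_mul]
      rw [hset, mem_ideal_span_monomial_image]
      intro d hd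
      have hdne : coeff d h ≠ 0 := mem_support_iff.mp hd
      have hne0 : d ≠ 0 := fun e => hdne (e ▸ hc0)
      have hnex : d ≠ Finsupp.single 0 1 := fun e => hdne (e ▸ hcx)
      have hney : d ≠ Finsupp.single 1 1 := fun e => hdne (e ▸ hcy)
      -- case analysis on d 0, d 1
      by_cases h20 : 2 ≤ d 0
      · exact ⟨Finsupp.single 0 2, by simp, by
          rw [Finsupp.single_le_iff]; exact h20⟩
      by_cases h21 : 2 ≤ d 1
      · exact ⟨Finsupp.single 1 2, by simp, by
          rw [Finsupp.single_le_iff]; exact h21⟩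
      by_cases h10 : 1 ≤ d 0
      · by_cases h11 : 1 ≤ d 1
        · refine ⟨Finsupp.single 0 1 + Finsupp.single 1 1, by simp, ?_⟩
          intro j
          fin_cases j <;> simp [Finsupp.single_apply] <;> omega
        · exfalso
          apply hnex
          ext j
          fin_cases j <;> simp [Finsupp.single_apply] <;> omega
      · by_cases h11 : 1 ≤ d 1
        · exfalso
          apply hney
          ext j
          fin_cases j <;> simp [Finsupp.single_apply] <;> omega
        · exfalso
          apply hne0
          ext j
          fin_cases j <;> simp <;> omega
    · -- h ∈ (x², xy, y²) → annihilates
      intro hI m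
      have hgen : ∀ g ∈ ({X 0 ^ 2, X 0 * X 1, X 1 ^ 2} : Set R),
          ∀ v : R × R, g • v ∈ N := by
        rw [hN]
        rintro g (rfl | rfl | rfl) ⟨a, b⟩
        · have : (X 0 ^ 2 : R) • ((a, b) : R × R) =
              (a * X 0 - b * X 1) • ((X 0, 0) : R × R) +
                (b * X 0) • ((X 1, X 0) : R × R) := by
            apply Prod.ext <;> simp [smul_eq_mul] <;> ring
          rw [this]
          exact Submodule.add_mem _
            (Submodule.smul_mem _ _ (Submodule.subset_span (by simp)))
            (Submodule.smul_mem _ _ (Submodule.subset_span (by simp)))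
        · have : (X 0 * X 1 : R) • ((a, b) : R × R) =
              (a * X 1) • ((X 0, 0) : R × R) +
                (b * X 0) • ((0, X 1) : R × R) := by
            apply Prod.ext <;> simp [smul_eq_mul] <;> ring
          rw [this]
          exact Submodule.add_mem _
            (Submodule.smul_mem _ _ (Submodule.subset_span (by simp)))
            (Submodule.smul_mem _ _ (Submodule.subset_span (by simp)))
        · have : (X 1 ^ 2 : R) • ((a, b) : R × R) =
              (a * X 1) • ((X 1, X 0) : R × R) +
                (b * X 1 - a * X 0) • ((0, X 1) : R × R) := by
            apply Prod.ext <;> simp [smul_eq_mul] <;> ring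
          rw [this]
          exact Submodule.add_mem _
            (Submodule.smul_mem _ _ (Submodule.subset_span (by simp)))
            (Submodule.smul_mem _ _ (Submodule.subset_span (by simp)))
      -- the set of annihilating polynomials for fixed m is closed under the ideal ops
      induction m using Quotient.inductionOn with
      | h v =>
        have : ∀ h ∈ Ideal.span ({X 0 ^ 2, X 0 * X 1, X 1 ^ 2} : Set R),
            h • v ∈ N := by
          intro h hh
          induction hh using Submodule.span_induction with
          | mem g hg => exact hgen g hg v
          | zero => simpa using N.zero_mem
          | add u w _ _ hu hw => rw [add_smul]; exact N.add_mem hu hw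
          | smul p g _ hg => rw [smul_eq_mul, mul_smul]; exact N.smul_mem p hg
        have hv := this h hI
        show h • Submodule.Quotient.mk v = 0
        rw [← Submodule.Quotient.mk_smul, Submodule.Quotient.mk_eq_zero]
        exact hv
  · -- (x², xy, y²) = (x,y)²
    conv_rhs => rw [pow_two, Ideal.span_mul_span']
    apply le_antisymm
    · rw [Ideal.span_le]
      rintro g (rfl | rfl | rfl)
      · exact Submodule.subset_span ⟨X 0, by simp, X 0, by simp, by ring⟩
      · exact Submodule.subset_span ⟨X 0, by simp, X 1, by simp, rfl⟩
      · exact Submodule.subset_span ⟨X 1, by simp, X 1, by simp, by ring⟩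
    · rw [Ideal.span_le]
      rintro g ⟨a, ha, b, hb, rfl⟩
      simp only [Set.mem_insert_iff, Set.mem_singleton_iff] at ha hb
      rcases ha with rfl | rfl <;> rcases hb with rfl | rfl
      · exact Ideal.subset_span (by left; ring)
      · exact Ideal.subset_span (by right; left; rfl)
      · exact Ideal.subset_span (by right; left; ring)
      · exact Ideal.subset_span (by right; right; rw [Set.mem_singleton_iff, pow_two])
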